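/- Fix indices p, q, r, s in {1, …, N} with p − 1 > q, q − 1 > r, and r − 1 > s, and consider the 16 N-qubit Pauli strings obtained as follows (the Parity-encoding strings of a double-excitation operator a†_p a†_q a_r a_s): for each of the four index pairs (p, p−1), (q, q−1), (r, r−1), (s, s−1), choose the block to be either (X at the first index and Z at the second) or (Y at the first index and I at the second); place X at every position strictly between q+1−1 and p−1 (i.e., positions p−2 down to q+1) and at every position strictly between s and r−1 (i.e., positions r−2 down to s+1); and place I at all remaining positions. Then two such strings commute if and only if their block choices differ at an even number of the four blocks, and the minimum number of parts in a partition of these 16 strings into pairwise-commuting families is exactly 2, achieved by partitioning according to the parity of the number of Y-blocks. -/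

import Mathlib

open Matrix Finset

inductive Pauli : Type
  | I | X | Y | Z
  deriving DecidableEq

instance : Fintype Pauli where
  elems := {Pauli.I, Pauli.X, Pauli.Y, Pauli.Z}
  complete := fun x => by cases x <;> simp

noncomputable def Pauli.mat : Pauli → Matrix (Fin 2) (Fin 2) ℂ
  | .I => 1
  | .X => !![0, 1; 1, 0]
  | .Y => !![0, -Complex.I; Complex.I, 0]
  | .Z => !![1, 0; 0, -1]

/-- An `N`-qubit Pauli string: a function from qubit indices to single-qubit Paulis. -/
abbrev PauliString (N : ℕ) := Fin N → Pauli

/-- The `2^N × 2^N` matrix of a Pauli string, as the tensor (Kronecker) product of its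
entries, with rows/columns indexed by `Fin N → Fin 2`. -/
noncomputable def Pmat {N : ℕ} (A : PauliString N) :
    Matrix (Fin N → Fin 2) (Fin N → Fin 2) ℂ :=
  Matrix.of fun x y => ∏ j, (A j).mat (x j) (y j)

/-- The Parity-encoding Pauli string of a double excitation operator `a†_p a†_q a_r a_s`
(with `p - 1 > q`, `q - 1 > r`, `r - 1 > s ≥ 1`), determined by a block choice
`b : Fin 4 → Bool` at each of the four index pairs `(p, p-1), (q, q-1), (r, r-1), (s, s-1)`:
`false` places `X` at the first index and `Z` at the second, `true` places `Y` at the first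
index and `I` at the second. `X` is placed at positions `p-2` down to `q+1` and positions
`r-2` down to `s+1`, and `I` at all remaining positions. -/
def parityString (N p q r s : ℕ) (b : Fin 4 → Bool) : PauliString N := fun j =>
  if j.val = p then (if b 0 then Pauli.Y else Pauli.X)
  else if j.val = p - 1 then (if b 0 then Pauli.I else Pauli.Z)
  else if j.val = q then (if b 1 then Pauli.Y else Pauli.X)
  else if j.val = q - 1 then (if b 1 then Pauli.I else Pauli.Z)
  else if j.val = r then (if b 2 then Pauli.Y else Pauli.X)
  else if j.val = r - 1 then (if b 2 then Pauli.I else Pauli.Z)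
  else if j.val = s then (if b 3 then Pauli.Y else Pauli.X)
  else if j.val = s - 1 then (if b 3 then Pauli.I else Pauli.Z)
  else if (q + 1 ≤ j.val ∧ j.val + 2 ≤ p) ∨ (s + 1 ≤ j.val ∧ j.val + 2 ≤ r) then Pauli.X
  else Pauli.I

/-- Number of `Y`-blocks in a block choice `b : Fin 4 → Bool`. -/
def yCount (b : Fin 4 → Bool) : ℕ := (Finset.univ.filter fun i => b i = true).card

/-- `P` is a partition of the finite set `T` of Pauli strings into families of pairwise
commuting strings. -/
def IsCommPartition {N : ℕ} (T : Finset (PauliString N))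
    (P : Finset (Finset (PauliString N))) : Prop :=
  (∀ S ∈ P, S.Nonempty) ∧
  (P : Set (Finset (PauliString N))).PairwiseDisjoint id ∧
  P.sup id = T ∧
  ∀ S ∈ P, ∀ A ∈ S, ∀ B ∈ S, Pmat A * Pmat B = Pmat B * Pmat A


def pcomm (a b : Pauli) : Prop := a = .I ∨ b = .I ∨ a = b

instance : DecidablePred (fun ab : Pauli × Pauli => pcomm ab.1 ab.2) := by
  unfold pcomm; infer_instance

instance (a b : Pauli) : Decidable (pcomm a b) := by unfold pcomm; infer_instance

lemma pauli_sign (a b : Pauli) :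
    a.mat * b.mat = (if pcomm a b then (1:ℂ) else -1) • (b.mat * a.mat) := by
  cases a <;> cases b <;>
    · ext i j
      fin_cases i <;> fin_cases j <;>
        simp [Pauli.mat, pcomm, Matrix.mul_apply, Fin.sum_univ_two] <;> ring_nf <;>
        simp [Complex.I_sq]

lemma pauli_nz (a b : Pauli) : ∃ x y : Fin 2, (a.mat * b.mat) x y ≠ 0 := by
  cases a <;> cases b
  case I.I => use 0, 0; norm_num [Pauli.mat, Matrix.one_fin_two, Matrix.mul_apply, Fin.sum_univ_two]
  case I.X => use 0, 1; norm_num [Pauli.mat, Matrix.one_fin_two, Matrix.mul_apply, Fin.sum_univ_two]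
  case I.Y => use 0, 1; norm_num [Pauli.mat, Matrix.one_fin_two, Matrix.mul_apply, Fin.sum_univ_two, Complex.I_ne_zero]
  case I.Z => use 0, 0; norm_num [Pauli.mat, Matrix.one_fin_two, Matrix.mul_apply, Fin.sum_univ_two]
  case X.I => use 0, 1; norm_num [Pauli.mat, Matrix.one_fin_two, Matrix.mul_apply, Fin.sum_univ_two]
  case X.X => use 0, 0; norm_num [Pauli.mat, Matrix.one_fin_two, Matrix.mul_apply, Fin.sum_univ_two]
  case X.Y => use 0, 0; norm_num [Pauli.mat, Matrix.one_fin_two, Matrix.mul_apply, Fin.sum_univ_two, Complex.I_ne_zero]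
  case X.Z => use 0, 1; norm_num [Pauli.mat, Matrix.one_fin_two, Matrix.mul_apply, Fin.sum_univ_two]
  case Y.I => use 0, 1; norm_num [Pauli.mat, Matrix.one_fin_two, Matrix.mul_apply, Fin.sum_univ_two, Complex.I_ne_zero]
  case Y.X => use 0, 0; norm_num [Pauli.mat, Matrix.one_fin_two, Matrix.mul_apply, Fin.sum_univ_two, Complex.I_ne_zero]
  case Y.Y => use 0, 0; norm_num [Pauli.mat, Matrix.one_fin_two, Matrix.mul_apply, Fin.sum_univ_two, Complex.I_mul_I]
  case Y.Z => use 0, 1; norm_num [Pauli.mat, Matrix.one_fin_two, Matrix.mul_apply, Fin.sum_univ_two, Complex.I_ne_zero]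
  case Z.I => use 0, 0; norm_num [Pauli.mat, Matrix.one_fin_two, Matrix.mul_apply, Fin.sum_univ_two]
  case Z.X => use 0, 1; norm_num [Pauli.mat, Matrix.one_fin_two, Matrix.mul_apply, Fin.sum_univ_two]
  case Z.Y => use 0, 1; norm_num [Pauli.mat, Matrix.one_fin_two, Matrix.mul_apply, Fin.sum_univ_two, Complex.I_ne_zero]
  case Z.Z => use 0, 0; norm_num [Pauli.mat, Matrix.one_fin_two, Matrix.mul_apply, Fin.sum_univ_two]

lemma Pmat_mul {N : ℕ} (A B : PauliString N) :
    Pmat A * Pmat B = Matrix.of fun x y => ∏ j, ((A j).mat * (B j).mat) (x j) (y j) := by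
  ext x y
  simp only [Matrix.mul_apply, Pmat, Matrix.of_apply, ← Finset.prod_mul_distrib]
  rw [Finset.prod_univ_sum (t := fun _ => (univ : Finset (Fin 2)))
    (f := fun j k => (A j).mat (x j) k * (B j).mat k (y j)), Fintype.piFinset_univ]

lemma Pmat_sign {N : ℕ} (A B : PauliString N) :
    Pmat A * Pmat B =
      ((-1 : ℂ) ^ (univ.filter fun j => ¬ pcomm (A j) (B j)).card) • (Pmat B * Pmat A) := by
  rw [Pmat_mul, Pmat_mul]
  ext x y
  simp only [Matrix.of_apply, Matrix.smul_apply, smul_eq_mul]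
  calc ∏ j, ((A j).mat * (B j).mat) (x j) (y j)
      = ∏ j, ((if pcomm (A j) (B j) then (1:ℂ) else -1) *
          ((B j).mat * (A j).mat) (x j) (y j)) := by
        refine Finset.prod_congr rfl fun j _ => ?_
        rw [pauli_sign (A j) (B j)]; simp
    _ = (∏ j, (if pcomm (A j) (B j) then (1:ℂ) else -1)) *
          ∏ j, ((B j).mat * (A j).mat) (x j) (y j) := Finset.prod_mul_distrib
    _ = _ := by
        congr 1
        rw [Finset.prod_ite, Finset.prod_const_one, one_mul, Finset.prod_const]

lemma Pmat_mul_entry {N : ℕ} (A B : PauliString N) :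
    ∃ x y, (Pmat A * Pmat B) x y ≠ 0 := by
  rw [Pmat_mul]
  have h2 : ∀ j : Fin N, ∃ xy : Fin 2 × Fin 2, ((A j).mat * (B j).mat) xy.1 xy.2 ≠ 0 := by
    intro j; obtain ⟨x, y, hxy⟩ := pauli_nz (A j) (B j); exact ⟨(x, y), hxy⟩
  choose f hf using h2
  refine ⟨fun j => (f j).1, fun j => (f j).2, ?_⟩
  simp only [Matrix.of_apply]
  exact Finset.prod_ne_zero_iff.mpr fun j _ => hf j

lemma Pmat_comm_iff {N : ℕ} (A B : PauliString N) :
    Pmat A * Pmat B = Pmat B * Pmat A ↔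
      Even (univ.filter fun j => ¬ pcomm (A j) (B j)).card := by
  constructor
  · intro h
    by_contra hodd
    rw [Nat.not_even_iff_odd] at hodd
    rw [Pmat_sign A B, hodd.neg_one_pow, neg_one_smul] at h
    obtain ⟨x, y, hxy⟩ := Pmat_mul_entry B A
    apply hxy
    have h'' : -((Pmat B * Pmat A) x y) = (Pmat B * Pmat A) x y := by
      simpa using congrFun (congrFun h x) y
    have : (2:ℂ) * (Pmat B * Pmat A) x y = 0 := by linear_combination - h''
    simpa using this
  · intro h
    rw [Pmat_sign A B, h.neg_one_pow, one_smul]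

lemma pcomm_refl (a : Pauli) : pcomm a a := Or.inr (Or.inr rfl)

section
variable {N p q r s : ℕ} (hs : 1 ≤ s) (hsr : s + 1 < r) (hrq : r + 1 < q)
  (hqp : q + 1 < p) (hpN : p < N)

include hs hsr hrq hqp hpN

set_option maxHeartbeats 1000000 in
lemma anticomm_iff (b b' : Fin 4 → Bool) (j : Fin N) :
    ¬ pcomm (parityString N p q r s b j) (parityString N p q r s b' j) ↔
      (j.val = p ∧ b 0 ≠ b' 0) ∨ (j.val = q ∧ b 1 ≠ b' 1) ∨
      (j.val = r ∧ b 2 ≠ b' 2) ∨ (j.val = s ∧ b 3 ≠ b' 3) := by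
  constructor
  · intro h
    by_cases h1 : (j:ℕ) = p
    · refine Or.inl ⟨h1, fun e => h ?_⟩
      simp only [parityString, if_pos h1]
      rw [e]; exact pcomm_refl _
    by_cases h2 : (j:ℕ) = p - 1
    · exfalso; apply h
      simp only [parityString, if_neg h1, if_pos h2]
      cases b 0 <;> cases b' 0 <;> simp [pcomm]
    by_cases h3 : (j:ℕ) = q
    · refine Or.inr (Or.inl ⟨h3, fun e => h ?_⟩)
      simp only [parityString, if_neg h1, if_neg h2, if_pos h3]
      rw [e]; exact pcomm_refl _
    by_cases h4 : (j:ℕ) = q - 1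
    · exfalso; apply h
      simp only [parityString, if_neg h1, if_neg h2, if_neg h3, if_pos h4]
      cases b 1 <;> cases b' 1 <;> simp [pcomm]
    by_cases h5 : (j:ℕ) = r
    · refine Or.inr (Or.inr (Or.inl ⟨h5, fun e => h ?_⟩))
      simp only [parityString, if_neg h1, if_neg h2, if_neg h3, if_neg h4, if_pos h5]
      rw [e]; exact pcomm_refl _
    by_cases h6 : (j:ℕ) = r - 1
    · exfalso; apply h
      simp only [parityString, if_neg h1, if_neg h2, if_neg h3, if_neg h4, if_neg h5,
        if_pos h6]
      cases b 2 <;> cases b' 2 <;> simp [pcomm]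
    by_cases h7 : (j:ℕ) = s
    · refine Or.inr (Or.inr (Or.inr ⟨h7, fun e => h ?_⟩))
      simp only [parityString, if_neg h1, if_neg h2, if_neg h3, if_neg h4, if_neg h5,
        if_neg h6, if_pos h7]
      rw [e]; exact pcomm_refl _
    by_cases h8 : (j:ℕ) = s - 1
    · exfalso; apply h
      simp only [parityString, if_neg h1, if_neg h2, if_neg h3, if_neg h4, if_neg h5,
        if_neg h6, if_neg h7, if_pos h8]
      cases b 3 <;> cases b' 3 <;> simp [pcomm]
    exfalso; apply h
    simp only [parityString, if_neg h1, if_neg h2, if_neg h3, if_neg h4, if_neg h5,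
      if_neg h6, if_neg h7, if_neg h8]
    exact pcomm_refl _
  · rintro (⟨hj, hb⟩ | ⟨hj, hb⟩ | ⟨hj, hb⟩ | ⟨hj, hb⟩)
    · simp only [parityString, hj, if_pos rfl]
      revert hb; cases b 0 <;> cases b' 0 <;> simp [pcomm]
    · have e1 : ¬ (q = p) := by omega
      have e2 : ¬ (q = p - 1) := by omega
      simp only [parityString, hj]
      simp only [if_neg e1, if_neg e2, if_pos rfl]
      revert hb; cases b 1 <;> cases b' 1 <;> simp [pcomm]
    · have e1 : ¬ (r = p) := by omega
      have e2 : ¬ (r = p - 1) := by omega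
      have e3 : ¬ (r = q) := by omega
      have e4 : ¬ (r = q - 1) := by omega
      simp only [parityString, hj]
      simp only [if_neg e1, if_neg e2, if_neg e3, if_neg e4, if_pos rfl]
      revert hb; cases b 2 <;> cases b' 2 <;> simp [pcomm]
    · have e1 : ¬ (s = p) := by omega
      have e2 : ¬ (s = p - 1) := by omega
      have e3 : ¬ (s = q) := by omega
      have e4 : ¬ (s = q - 1) := by omega
      have e5 : ¬ (s = r) := by omega
      have e6 : ¬ (s = r - 1) := by omega
      simp only [parityString, hj]
      simp only [if_neg e1, if_neg e2, if_neg e3, if_neg e4, if_neg e5, if_neg e6, if_pos rfl]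
      revert hb; cases b 3 <;> cases b' 3 <;> simp [pcomm]

lemma anticomm_card (b b' : Fin 4 → Bool) :
    (univ.filter fun j : Fin N =>
      ¬ pcomm (parityString N p q r s b j) (parityString N p q r s b' j)).card
      = (univ.filter fun i : Fin 4 => b i ≠ b' i).card := by
  classical
  have hq : q < N := by omega
  have hr : r < N := by omega
  have hs2 : s < N := by omega
  set f : Fin 4 → Fin N := ![⟨p, hpN⟩, ⟨q, hq⟩, ⟨r, hr⟩, ⟨s, hs2⟩] with hf
  have hinj : Function.Injective f := by
    intro i i' hii
    fin_cases i <;> fin_cases i' <;> simp_all [f, Fin.ext_iff] <;> omega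
  have heq : (univ.filter fun j : Fin N =>
      ¬ pcomm (parityString N p q r s b j) (parityString N p q r s b' j))
      = (univ.filter fun i : Fin 4 => b i ≠ b' i).image f := by
    ext j
    simp only [Finset.mem_filter, Finset.mem_univ, true_and, Finset.mem_image]
    rw [anticomm_iff hs hsr hrq hqp hpN]
    constructor
    · rintro (⟨hj, hb⟩ | ⟨hj, hb⟩ | ⟨hj, hb⟩ | ⟨hj, hb⟩)
      exacts [⟨0, hb, Fin.ext (by simp [f, hj.symm])⟩,
        ⟨1, hb, Fin.ext (by simp [f, hj.symm])⟩,
        ⟨2, hb, Fin.ext (by simp [f, hj.symm])⟩,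
        ⟨3, hb, Fin.ext (by simp [f, hj.symm])⟩]
    · rintro ⟨i, hb, rfl⟩
      fin_cases i
      · exact Or.inl ⟨by simp [f], hb⟩
      · exact Or.inr (Or.inl ⟨by simp [f], hb⟩)
      · exact Or.inr (Or.inr (Or.inl ⟨by simp [f], hb⟩))
      · exact Or.inr (Or.inr (Or.inr ⟨by simp [f], hb⟩))
  rw [heq, Finset.card_image_of_injective _ hinj]

lemma pS_injective : Function.Injective (parityString N p q r s) := by
  intro b b' h
  have hq : q < N := by omega
  have hr : r < N := by omega
  have hs2 : s < N := by omega
  funext i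
  fin_cases i
  · have e := congrFun h ⟨p, hpN⟩
    simp [parityString] at e
    show b 0 = b' 0
    revert e; cases b 0 <;> cases b' 0 <;> simp
  · have e := congrFun h ⟨q, hq⟩
    have e1 : ¬ (q = p) := by omega
    have e2 : ¬ (q = p - 1) := by omega
    simp only [parityString] at e
    simp only [if_neg e1, if_neg e2, if_pos rfl] at e
    show b 1 = b' 1
    revert e; cases b 1 <;> cases b' 1 <;> simp
  · have e := congrFun h ⟨r, hr⟩
    have e1 : ¬ (r = p) := by omega
    have e2 : ¬ (r = p - 1) := by omega
    have e3 : ¬ (r = q) := by omega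
    have e4 : ¬ (r = q - 1) := by omega
    simp only [parityString] at e
    simp only [if_neg e1, if_neg e2, if_neg e3, if_neg e4, if_pos rfl] at e
    show b 2 = b' 2
    revert e; cases b 2 <;> cases b' 2 <;> simp
  · have e := congrFun h ⟨s, hs2⟩
    have e1 : ¬ (s = p) := by omega
    have e2 : ¬ (s = p - 1) := by omega
    have e3 : ¬ (s = q) := by omega
    have e4 : ¬ (s = q - 1) := by omega
    have e5 : ¬ (s = r) := by omega
    have e6 : ¬ (s = r - 1) := by omega
    simp only [parityString] at e
    simp only [if_neg e1, if_neg e2, if_neg e3, if_neg e4, if_neg e5, if_neg e6,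
      if_pos rfl] at e
    show b 3 = b' 3
    revert e; cases b 3 <;> cases b' 3 <;> simp
end

lemma ham_parity (b b' : Fin 4 → Bool) :
    Even ((univ.filter fun i => b i ≠ b' i).card) ↔
      (Even (yCount b) ↔ Even (yCount b')) := by
  revert b b'; decide

lemma natcard_diff (b b' : Fin 4 → Bool) :
    Nat.card {i : Fin 4 // b i ≠ b' i} = (univ.filter fun i => b i ≠ b' i).card := by
  rw [Nat.card_eq_fintype_card, Fintype.card_subtype]

/-- Two Parity-encoding strings of `a†_p a†_q a_r a_s` commute iff their block choices
differ at an even number of the four blocks; and the minimum number of parts in a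
partition of these 16 strings into pairwise-commuting families is exactly 2, achieved by
partitioning according to the parity of the number of `Y`-blocks. -/
theorem parity_commute_iff_and_min_partition {N p q r s : ℕ}
    (hs : 1 ≤ s) (hsr : s + 1 < r) (hrq : r + 1 < q) (hqp : q + 1 < p) (hpN : p < N) :
    (∀ b b' : Fin 4 → Bool,
      Pmat (parityString N p q r s b) * Pmat (parityString N p q r s b') =
        Pmat (parityString N p q r s b') * Pmat (parityString N p q r s b) ↔
      Even (Nat.card {i : Fin 4 // b i ≠ b' i})) ∧
    IsLeast {k | ∃ P, IsCommPartition (Finset.univ.image (parityString N p q r s)) P ∧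
        P.card = k} 2 ∧
    IsCommPartition (Finset.univ.image (parityString N p q r s))
      {(Finset.univ.filter fun b => Even (yCount b)).image (parityString N p q r s),
       (Finset.univ.filter fun b => ¬ Even (yCount b)).image (parityString N p q r s)} := by
  have hinj := pS_injective hs hsr hrq hqp hpN
  have key : ∀ b b' : Fin 4 → Bool,
      (Pmat (parityString N p q r s b) * Pmat (parityString N p q r s b') =
        Pmat (parityString N p q r s b') * Pmat (parityString N p q r s b) ↔
      Even (Nat.card {i : Fin 4 // b i ≠ b' i})) := by
    intro b b'
    rw [Pmat_comm_iff, anticomm_card hs hsr hrq hqp hpN, natcard_diff]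
  set T0 := (Finset.univ.filter fun b => Even (yCount b)).image (parityString N p q r s)
    with hT0def
  set T1 := (Finset.univ.filter fun b => ¬ Even (yCount b)).image (parityString N p q r s)
    with hT1def
  have hmem0 : parityString N p q r s (fun _ => false) ∈ T0 :=
    Finset.mem_image_of_mem _ (Finset.mem_filter.mpr ⟨Finset.mem_univ _, by decide⟩)
  have hmem1 : parityString N p q r s ![true, false, false, false] ∈ T1 :=
    Finset.mem_image_of_mem _ (Finset.mem_filter.mpr ⟨Finset.mem_univ _, by decide⟩)
  have hd : Disjoint T0 T1 := by
    rw [Finset.disjoint_left]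
    rintro A hA0 hA1
    rw [hT0def, Finset.mem_image] at hA0
    rw [hT1def, Finset.mem_image] at hA1
    obtain ⟨b, hb, rfl⟩ := hA0
    obtain ⟨b', hb', e⟩ := hA1
    rw [Finset.mem_filter] at hb hb'
    exact hb'.2 (hinj e ▸ hb.2)
  have hT01 : T0 ≠ T1 := by
    intro hEq
    exact Finset.disjoint_left.mp hd hmem0 (hEq ▸ hmem0)
  have hpart : IsCommPartition (Finset.univ.image (parityString N p q r s)) {T0, T1} := by
    refine ⟨?_, ?_, ?_, ?_⟩
    · intro S hS
      rcases Finset.mem_insert.mp hS with rfl | hS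
      · exact ⟨_, hmem0⟩
      · rw [Finset.mem_singleton] at hS
        subst hS
        exact ⟨_, hmem1⟩
    · intro S hS S' hS' hne
      simp only [Finset.coe_insert, Set.mem_insert_iff, Finset.coe_singleton,
        Set.mem_singleton_iff] at hS hS'
      rcases hS with rfl | rfl <;> rcases hS' with rfl | rfl
      · exact absurd rfl hne
      · exact hd
      · exact hd.symm
      · exact absurd rfl hne
    · rw [Finset.sup_insert, Finset.sup_singleton, id, id, Finset.sup_eq_union,
        hT0def, hT1def, ← Finset.image_union, Finset.filter_union_filter_not_eq]
    · intro S hS A hA B hB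
      have hcomm : ∀ b b' : Fin 4 → Bool, (Even (yCount b) ↔ Even (yCount b')) →
          Pmat (parityString N p q r s b) * Pmat (parityString N p q r s b') =
            Pmat (parityString N p q r s b') * Pmat (parityString N p q r s b) := by
        intro b b' hbb
        rw [key, natcard_diff, ham_parity]
        exact hbb
      rcases Finset.mem_insert.mp hS with rfl | hS
      · rw [hT0def, Finset.mem_image] at hA hB
        obtain ⟨b, hb, rfl⟩ := hA
        obtain ⟨b', hb', rfl⟩ := hB
        rw [Finset.mem_filter] at hb hb'
        exact hcomm b b' (iff_of_true hb.2 hb'.2)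
      · rw [Finset.mem_singleton] at hS
        subst hS
        rw [hT1def, Finset.mem_image] at hA hB
        obtain ⟨b, hb, rfl⟩ := hA
        obtain ⟨b', hb', rfl⟩ := hB
        rw [Finset.mem_filter] at hb hb'
        exact hcomm b b' (iff_of_false hb.2 hb'.2)
  refine ⟨key, ⟨⟨{T0, T1}, hpart, ?_⟩, ?_⟩, hpart⟩
  · rw [Finset.card_insert_of_notMem (by simpa using hT01), Finset.card_singleton]
  · rintro k ⟨P, ⟨hne, hdisj, hsup, hcomm⟩, rfl⟩
    have hA : parityString N p q r s (fun _ => false) ∈ P.sup id := by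
      rw [hsup]; exact Finset.mem_image_of_mem _ (Finset.mem_univ _)
    have hB : parityString N p q r s ![true, false, false, false] ∈ P.sup id := by
      rw [hsup]; exact Finset.mem_image_of_mem _ (Finset.mem_univ _)
    obtain ⟨S1, hS1, hA1⟩ := Finset.mem_sup.mp hA
    obtain ⟨S2, hS2, hB2⟩ := Finset.mem_sup.mp hB
    have hne12 : S1 ≠ S2 := by
      rintro rfl
      have hc := hcomm S1 hS1 _ hA1 _ hB2
      rw [key, natcard_diff] at hc
      revert hc; decide
    exact Finset.one_lt_card.mpr ⟨S1, hS1, S2, hS2, hne12⟩
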